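/- Let m₀, T₀, τ₀ > 0 and t₀ > 1 be fixed. For 0 < h < 1 set ε = (log(1/h))^{−1}, m = m₀ + εT₀, a = h^{−m}, k = 1 − εt₀, τ = τ₀ h^{−1/3}, and define φ as in the context. Then there exist constants C > 0 and h₀ ∈ (0,1), depending only on m₀, T₀, t₀, τ₀, such that for all 0 < h ≤ h₀ and all r ≥ 0, φ(r) ≤ C h^{−1/3} log(1/h). -/

import Mathlib

open Real

/-- The derivative of the phase function: `φ΄(t) = τ((t+1)^{-k} - (a+1)^{-k})` for
`0 ≤ t ≤ a` and `φ΄(t) = 0` for `t ≥ a`. -/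
noncomputable def phiDeriv (τ a k t : ℝ) : ℝ :=
  if t ≤ a then τ * ((t + 1) ^ (-k) - (a + 1) ^ (-k)) else 0

/-- The phase function `φ(r) = ∫₀^r φ΄(t) dt`. -/
noncomputable def phi (τ a k r : ℝ) : ℝ := ∫ t in (0 : ℝ)..r, phiDeriv τ a k t

lemma phiDeriv_intervalIntegrable (τ a k : ℝ) {x y : ℝ} (hx : 0 ≤ x) (hy : 0 ≤ y) :
    IntervalIntegrable (phiDeriv τ a k) MeasureTheory.volume x y := by
  have hrepr : phiDeriv τ a k
      = (Set.Iic a).indicator (fun t => τ * ((t + 1) ^ (-k) - (a + 1) ^ (-k))) := by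
    funext t
    simp [phiDeriv, Set.indicator_apply, Set.mem_Iic]
  have hcont : ContinuousOn (fun t : ℝ => τ * ((t + 1) ^ (-k) - (a + 1) ^ (-k)))
      (Set.uIcc x y) := by
    apply ContinuousOn.mul continuousOn_const
    apply ContinuousOn.sub _ continuousOn_const
    apply ContinuousOn.rpow_const ((continuous_id.add continuous_const).continuousOn)
    intro t ht
    left
    rcases Set.mem_uIcc.mp ht with ⟨h1, _⟩ | ⟨h1, _⟩ <;> intro hc <;>
      change t + 1 = 0 at hc <;> linarith
  have hint : IntervalIntegrable (fun t : ℝ => τ * ((t + 1) ^ (-k) - (a + 1) ^ (-k)))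
      MeasureTheory.volume x y := hcont.intervalIntegrable
  rw [hrepr, intervalIntegrable_iff]
  rw [intervalIntegrable_iff] at hint
  exact hint.indicator measurableSet_Iic

lemma phi_le (τ a k : ℝ) (hτ : 0 < τ) (ha : 1 ≤ a) (hk1 : k < 1)
    (r : ℝ) (hr : 0 ≤ r) :
    phi τ a k r ≤ τ * ((a + 1) ^ (1 - k) / (1 - k)) := by
  have ha0 : (0:ℝ) ≤ a := by linarith
  set R := min r a with hRdef
  have hR0 : 0 ≤ R := le_min hr ha0
  have hRa : R ≤ a := min_le_right r a
  -- step 1 : phi r = phi R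
  have heq : phi τ a k r = phi τ a k R := by
    rcases le_total r a with h | h
    · rw [hRdef, min_eq_left h]
    · have hRa' : R = a := min_eq_right h
      have hsplit := intervalIntegral.integral_add_adjacent_intervals
        (phiDeriv_intervalIntegrable τ a k le_rfl hR0)
        (phiDeriv_intervalIntegrable τ a k hR0 hr)
      have h2 : (∫ t in R..r, phiDeriv τ a k t) = 0 := by
        have hEq : Set.EqOn (phiDeriv τ a k) 0 (Set.uIcc R r) := by
          intro t ht
          have hta : a ≤ t := by
            rcases Set.mem_uIcc.mp ht with ⟨h1, _⟩ | ⟨h1, _⟩ <;> linarith [hRa'.ge, h]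
          show phiDeriv τ a k t = 0
          unfold phiDeriv
          rcases eq_or_lt_of_le hta with hEq' | hLt
          · rw [← hEq']
            simp
          · rw [if_neg (not_le.mpr hLt)]
        rw [intervalIntegral.integral_congr hEq]
        simp
      unfold phi
      rw [← hsplit, h2, add_zero]
  rw [heq]
  -- step 2 : compare with the majorant
  have hmono : phi τ a k R ≤ ∫ t in (0:ℝ)..R, τ * (t + 1) ^ (-k) := by
    apply intervalIntegral.integral_mono_on hR0
      (phiDeriv_intervalIntegrable τ a k le_rfl hR0)
    · apply ContinuousOn.intervalIntegrable
      apply ContinuousOn.mul continuousOn_const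
      apply ContinuousOn.rpow_const ((continuous_id.add continuous_const).continuousOn)
      intro t ht
      left
      rcases Set.mem_uIcc.mp ht with ⟨h1, _⟩ | ⟨h1, _⟩ <;> intro hc <;>
        change t + 1 = 0 at hc <;> linarith
    · intro t ht
      unfold phiDeriv
      have h1 : (0:ℝ) ≤ (a + 1) ^ (-k) := Real.rpow_nonneg (by linarith) _
      have h2 : (0:ℝ) ≤ (t + 1) ^ (-k) := Real.rpow_nonneg (by linarith [ht.1]) _
      split
      · nlinarith
      · exact mul_nonneg hτ.le h2
  -- step 3 : compute the majorant integral
  have hcalc : (∫ t in (0:ℝ)..R, τ * (t + 1) ^ (-k))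
      = τ * (((R + 1) ^ (1 - k) - 1) / (1 - k)) := by
    rw [intervalIntegral.integral_const_mul]
    congr 1
    have hcomp := intervalIntegral.integral_comp_add_right (a := (0:ℝ)) (b := R)
      (fun t : ℝ => t ^ (-k)) 1
    rw [hcomp, integral_rpow (Or.inl (by linarith)),
      show -k + 1 = 1 - k by ring]
    norm_num
  calc phi τ a k R ≤ τ * (((R + 1) ^ (1 - k) - 1) / (1 - k)) := hmono.trans_eq hcalc
    _ ≤ τ * ((a + 1) ^ (1 - k) / (1 - k)) := by
        have h1 : (R + 1) ^ (1 - k) ≤ (a + 1) ^ (1 - k) :=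
          Real.rpow_le_rpow (by linarith) (by linarith) (by linarith)
        have hk : (0:ℝ) < 1 - k := by linarith
        gcongr
        linarith

set_option maxHeartbeats 1000000 in
theorem phi_bound_regime_one (m₀ T₀ t₀ τ₀ : ℝ)
    (hm₀ : 0 < m₀) (hT₀ : 0 < T₀) (ht₀ : 1 < t₀) (hτ₀ : 0 < τ₀) :
    ∃ C > (0 : ℝ), ∃ h₀ : ℝ, 0 < h₀ ∧ h₀ < 1 ∧ ∀ h : ℝ, 0 < h → h ≤ h₀ →
      ∀ r : ℝ, 0 ≤ r →
        phi (τ₀ * h ^ (-(1 : ℝ) / 3)) (h ^ (-(m₀ + (Real.log (1 / h))⁻¹ * T₀)))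
            (1 - (Real.log (1 / h))⁻¹ * t₀) r
          ≤ C * h ^ (-(1 : ℝ) / 3) * Real.log (1 / h) := by
  set E := Real.exp ((m₀ + T₀) * t₀) with hE
  have hEpos : 0 < E := Real.exp_pos _
  refine ⟨2 * τ₀ * E, by positivity, Real.exp (-(1 + 2 * t₀)), Real.exp_pos _, ?_, ?_⟩
  · rw [Real.exp_lt_one_iff]
    linarith
  intro h hh hhle r hr
  set L := Real.log (1 / h) with hLdef
  have hLlog : L = -Real.log h := by rw [hLdef, one_div, Real.log_inv]
  have hlogle : Real.log h ≤ -(1 + 2 * t₀) := by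
    calc Real.log h ≤ Real.log (Real.exp (-(1 + 2 * t₀))) := Real.log_le_log hh hhle
      _ = -(1 + 2 * t₀) := Real.log_exp _
  have hLge : 1 + 2 * t₀ ≤ L := by rw [hLlog]; linarith
  have hLpos : 0 < L := by linarith
  have hLinv_pos : 0 < L⁻¹ := inv_pos.mpr hLpos
  have hLinv_le_one : L⁻¹ ≤ 1 := by
    rw [inv_le_one_iff₀]
    right; linarith
  have hεt : L⁻¹ * t₀ ≤ 1 / 2 := by
    rw [inv_mul_le_iff₀ hLpos]
    nlinarith
  have hεt_pos : 0 < L⁻¹ * t₀ := by positivity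
  have hh1 : h < 1 := lt_of_le_of_lt hhle (by rw [Real.exp_lt_one_iff]; linarith)
  set k := 1 - L⁻¹ * t₀ with hk
  set a := h ^ (-(m₀ + L⁻¹ * T₀)) with ha
  set τ := τ₀ * h ^ (-(1:ℝ) / 3) with hτdef
  have hXpos : (0:ℝ) < h ^ (-(1:ℝ) / 3) := Real.rpow_pos_of_pos hh _
  have hτpos : 0 < τ := by positivity
  have hexp_nonpos : -(m₀ + L⁻¹ * T₀) ≤ 0 := by
    have : 0 ≤ L⁻¹ * T₀ := by positivity
    linarith
  have ha1 : 1 ≤ a :=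
    Real.one_le_rpow_of_pos_of_le_one_of_nonpos hh hh1.le hexp_nonpos
  have hk1 : k < 1 := by rw [hk]; linarith
  have hmain := phi_le τ a k hτpos ha1 hk1 r hr
  -- bound the right-hand side
  have h1k : 1 - k = L⁻¹ * t₀ := by rw [hk]; ring
  have hlogh : Real.log h = -L := by rw [hLlog]; ring
  have hLL : L * L⁻¹ = 1 := mul_inv_cancel₀ (ne_of_gt hLpos)
  have hae : a ^ (L⁻¹ * t₀) = Real.exp ((m₀ + L⁻¹ * T₀) * t₀) := by
    rw [ha, ← Real.rpow_mul hh.le, Real.rpow_def_of_pos hh, hlogh]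
    congr 1
    linear_combination ((m₀ + L⁻¹ * T₀) * t₀) * hLL
  have haexp : a ^ (L⁻¹ * t₀) ≤ E := by
    rw [hae, hE]
    apply Real.exp_le_exp.mpr
    have hTT : L⁻¹ * T₀ ≤ T₀ := by nlinarith
    nlinarith
  have hbase : (a + 1) ^ (L⁻¹ * t₀) ≤ 2 * E := by
    calc (a + 1) ^ (L⁻¹ * t₀) ≤ (2 * a) ^ (L⁻¹ * t₀) :=
          Real.rpow_le_rpow (by linarith) (by linarith) hεt_pos.le
      _ = 2 ^ (L⁻¹ * t₀) * a ^ (L⁻¹ * t₀) := Real.mul_rpow (by norm_num) (by linarith)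
      _ ≤ 2 * E := by
          have h2e : (2:ℝ) ^ (L⁻¹ * t₀) ≤ 2 := by
            calc (2:ℝ) ^ (L⁻¹ * t₀) ≤ 2 ^ (1:ℝ) :=
                  Real.rpow_le_rpow_of_exponent_le one_le_two (by linarith)
              _ = 2 := Real.rpow_one 2
          have hnn : (0:ℝ) ≤ a ^ (L⁻¹ * t₀) := Real.rpow_nonneg (by linarith) _
          have h2p : (0:ℝ) ≤ (2:ℝ) ^ (L⁻¹ * t₀) := Real.rpow_nonneg (by norm_num) _
          nlinarith
  have hdiv : (a + 1) ^ (1 - k) / (1 - k) ≤ 2 * E * L := by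
    rw [h1k, div_eq_mul_inv]
    have hinveq : (L⁻¹ * t₀)⁻¹ = L / t₀ := by
      field_simp
    rw [hinveq]
    have h2 : L / t₀ ≤ L := div_le_self hLpos.le (by linarith)
    have hx0 : (0:ℝ) ≤ (a + 1) ^ (L⁻¹ * t₀) := Real.rpow_nonneg (by linarith) _
    have hLt0 : (0:ℝ) ≤ L / t₀ := by positivity
    calc (a + 1) ^ (L⁻¹ * t₀) * (L / t₀) ≤ (2 * E) * L :=
          mul_le_mul hbase h2 hLt0 (by positivity)
      _ = 2 * E * L := by ring
  calc phi τ a k r ≤ τ * ((a + 1) ^ (1 - k) / (1 - k)) := hmain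
    _ ≤ τ * (2 * E * L) := mul_le_mul_of_nonneg_left hdiv hτpos.le
    _ = 2 * τ₀ * E * h ^ (-(1:ℝ) / 3) * L := by rw [hτdef]; ring
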